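/- Let c ∈ ℕ with c ≥ 2 and let n ∈ ℕ₀. Then, as an identity of complex numbers, Σ_{ξ ∈ μ_c, ξ ≠ 1} ℬ_n(ξ) = (1 − c^{n+1})·B_{n+1}/(n+1). -/

import Mathlib

/-- The twisted Bernoulli numbers `ℬ_n(ξ)`, defined by
`1/(1 - ξ·exp t) = Σ_{n≥0} ℬ_n(ξ) tⁿ/n!` in `ℂ[[t]]`. -/
noncomputable def twistedBernoulli (ξ : ℂ) (n : ℕ) : ℂ :=
  (Nat.factorial n : ℂ) *
    PowerSeries.coeff n (1 - PowerSeries.C ξ * PowerSeries.exp ℂ)⁻¹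

open PowerSeries Finset

/-- Sum of `j`-th powers of the `c`-th roots of unity vanishes for `0 < j < c`. -/
lemma sum_pow_nthRootsFinset_eq_zero {c j : ℕ} (hj : 0 < j) (hjc : j < c) :
    ∑ ξ ∈ Polynomial.nthRootsFinset c (1 : ℂ), ξ ^ j = 0 := by
  have hc : 0 < c := hj.trans hjc
  obtain ⟨ω, hω⟩ : ∃ ω : ℂ, IsPrimitiveRoot ω c := ⟨_, Complex.isPrimitiveRoot_exp c hc.ne'⟩
  have hωmem : ω ∈ Polynomial.nthRootsFinset c (1 : ℂ) := hω.mem_nthRootsFinset hc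
  have hω0 : ω ≠ 0 := Polynomial.ne_zero_of_mem_nthRootsFinset one_ne_zero hωmem
  have key : ∑ ξ ∈ Polynomial.nthRootsFinset c (1 : ℂ), (ω * ξ) ^ j
      = ∑ ξ ∈ Polynomial.nthRootsFinset c (1 : ℂ), ξ ^ j := by
    apply Finset.sum_nbij' (fun ξ => ω * ξ) (fun ξ => ω⁻¹ * ξ)
    · intro a ha
      have := Polynomial.mul_mem_nthRootsFinset hωmem ha; rwa [mul_one] at this
    · intro a ha
      have : ω⁻¹ ∈ Polynomial.nthRootsFinset c (1 : ℂ) := by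
        rw [Polynomial.mem_nthRootsFinset hc] at hωmem ⊢
        rw [inv_pow, hωmem, inv_one]
      have := Polynomial.mul_mem_nthRootsFinset this ha; rwa [mul_one] at this
    · intro a _; field_simp
    · intro a _; field_simp
    · intro a _; rfl
  have hsum : (ω ^ j) * ∑ ξ ∈ Polynomial.nthRootsFinset c (1 : ℂ), ξ ^ j
      = ∑ ξ ∈ Polynomial.nthRootsFinset c (1 : ℂ), ξ ^ j := by
    rw [Finset.mul_sum]
    simpa [mul_pow] using key
  have hne : ω ^ j ≠ 1 := hω.pow_ne_one_of_pos_of_lt hj.ne' hjc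
  have h0 : (ω ^ j - 1) * ∑ ξ ∈ Polynomial.nthRootsFinset c (1 : ℂ), ξ ^ j = 0 := by
    linear_combination hsum
  rcases mul_eq_zero.mp h0 with h | h
  · exact absurd (sub_eq_zero.mp h) hne
  · exact h

/-- Geometric-sum identity in `ℂ⟦X⟧` for a `c`-th root of unity. -/
lemma one_sub_C_mul_exp_mul_geom {c : ℕ} {ξ : ℂ} (hξ : ξ ^ c = 1) :
    (1 - PowerSeries.C ξ * exp ℂ) * (∑ j ∈ range c, PowerSeries.C (ξ ^ j) * exp ℂ ^ j)
      = 1 - exp ℂ ^ c := by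
  have h := geom_sum_mul (PowerSeries.C ξ * exp ℂ) c
  have hpow : ∀ j : ℕ, (PowerSeries.C ξ * exp ℂ) ^ j
      = PowerSeries.C (ξ ^ j) * exp ℂ ^ j := by
    intro j; rw [mul_pow, ← map_pow]
  simp_rw [hpow] at h
  have hc : PowerSeries.C (ξ ^ c) = 1 := by rw [hξ, map_one]
  rw [hc, one_mul] at h
  linear_combination -h

lemma inv_mul_one_sub_exp_pow {c : ℕ} {ξ : ℂ} (hξc : ξ ^ c = 1) (hξ1 : ξ ≠ 1) :
    (1 - PowerSeries.C ξ * exp ℂ)⁻¹ * (1 - exp ℂ ^ c)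
      = ∑ j ∈ range c, PowerSeries.C (ξ ^ j) * exp ℂ ^ j := by
  rw [← one_sub_C_mul_exp_mul_geom hξc, ← mul_assoc, PowerSeries.inv_mul_cancel, one_mul]
  simpa [sub_ne_zero] using fun h => hξ1 h.symm

theorem sum_twistedBernoulli_nthRoots (c : ℕ) (hc : 2 ≤ c) (n : ℕ) :
    ∑ ξ ∈ (Polynomial.nthRootsFinset c (1 : ℂ)).erase 1, twistedBernoulli ξ n
      = (1 - (c : ℂ) ^ (n + 1)) * (bernoulli (n + 1) : ℂ) / ((n : ℂ) + 1) := by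
  have hc0 : 0 < c := by omega
  set T := Polynomial.nthRootsFinset c (1 : ℂ) with hT
  set S := T.erase 1 with hS
  set E := exp ℂ with hE
  set G : ℂ⟦X⟧ := ∑ ξ ∈ S, (1 - PowerSeries.C ξ * E)⁻¹ with hG
  set F : ℂ⟦X⟧ := PowerSeries.mk fun k =>
    (1 - (c : ℂ) ^ (k + 1)) * (bernoulli (k + 1) : ℂ) / (((k : ℂ) + 1) * (k.factorial : ℂ))
    with hF
  set B : ℂ⟦X⟧ := bernoulliPowerSeries ℂ with hB
  -- primitive root for card
  obtain ⟨ω, hω⟩ : ∃ ω : ℂ, IsPrimitiveRoot ω c := ⟨_, Complex.isPrimitiveRoot_exp c hc0.ne'⟩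
  have hcard : T.card = c := hω.card_nthRootsFinset
  have h1T : (1 : ℂ) ∈ T := Polynomial.one_mem_nthRootsFinset hc0
  -- Step 1 : G * (1 - E^c) = C c - ∑ E^j
  have step1 : G * (1 - E ^ c) = PowerSeries.C (c : ℂ) - ∑ j ∈ range c, E ^ j := by
    rw [hG, Finset.sum_mul]
    have : ∀ ξ ∈ S, (1 - PowerSeries.C ξ * E)⁻¹ * (1 - E ^ c)
        = ∑ j ∈ range c, PowerSeries.C (ξ ^ j) * E ^ j := by
      intro ξ hξ
      have hξT : ξ ∈ T := Finset.mem_of_mem_erase hξ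
      have hξ1 : ξ ≠ 1 := Finset.ne_of_mem_erase hξ
      exact inv_mul_one_sub_exp_pow ((Polynomial.mem_nthRootsFinset hc0 1).mp hξT) hξ1
    rw [Finset.sum_congr rfl this, Finset.sum_comm]
    have hsum : ∀ j ∈ range c, ∑ ξ ∈ S, PowerSeries.C (ξ ^ j) * E ^ j
        = (if j = 0 then PowerSeries.C (c : ℂ) else 0) - E ^ j := by
      intro j hj
      rw [← Finset.sum_mul, ← map_sum]
      have hSsum : ∑ ξ ∈ S, ξ ^ j = (∑ ξ ∈ T, ξ ^ j) - 1 := by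
        rw [hS, Finset.sum_erase_eq_sub h1T, one_pow]
      rcases Nat.eq_zero_or_pos j with rfl | hjpos
      · simp only [pow_zero, Finset.sum_const, hcard, nsmul_eq_mul, mul_one] at hSsum
        simp [hSsum, map_sub]
      · have := sum_pow_nthRootsFinset_eq_zero hjpos (Finset.mem_range.mp hj)
        rw [← hT] at this
        rw [hSsum, this, if_neg hjpos.ne']
        simp
    rw [Finset.sum_congr rfl hsum, Finset.sum_sub_distrib, Finset.sum_ite_eq' (range c) 0]
    simp [Finset.mem_range.mpr hc0]
  -- X * F = B - rescale c B
  have hXF : PowerSeries.X * F = B - rescale (c : ℂ) B := by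
    ext k
    rcases k with _ | k
    · rw [coeff_zero_X_mul, map_sub, coeff_rescale, pow_zero, one_mul, sub_self]
    · rw [coeff_succ_X_mul]
      simp only [hF, coeff_mk, map_sub, hB, bernoulliPowerSeries, coeff_rescale, coeff_mk]
      have halg : (algebraMap ℚ ℂ) (bernoulli (k + 1) / ((k + 1).factorial : ℚ))
          = (bernoulli (k + 1) : ℂ) / (((k + 1).factorial : ℕ) : ℂ) := by
        rw [map_div₀, eq_ratCast, eq_ratCast]
        norm_cast
      rw [halg]
      have h1 : ((k : ℂ) + 1) ≠ 0 := Nat.cast_add_one_ne_zero k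
      have h2 : ((k.factorial : ℂ)) ≠ 0 := Nat.cast_ne_zero.mpr k.factorial_ne_zero
      have h3 : (((k + 1).factorial : ℕ) : ℂ) ≠ 0 :=
        Nat.cast_ne_zero.mpr (k + 1).factorial_ne_zero
      field_simp
      rw [Nat.factorial_succ]
      push_cast
      ring
  -- geometric sum with ξ = 1
  have hgeo : (1 - E) * (∑ j ∈ range c, E ^ j) = 1 - E ^ c := by
    have := one_sub_C_mul_exp_mul_geom (ξ := (1 : ℂ)) (c := c) (one_pow c)
    simpa using this
  have hBmul : B * (1 - E) = -PowerSeries.X := by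
    have := bernoulliPowerSeries_mul_exp_sub_one (A := ℂ)
    rw [← hB, ← hE] at this
    linear_combination -this
  have hBc : rescale (c : ℂ) B * (1 - E ^ c) = -(PowerSeries.C (c : ℂ) * PowerSeries.X) := by
    have h1 : rescale (c : ℂ) (B * (E - 1)) = rescale (c : ℂ) PowerSeries.X := by
      rw [hB, hE, bernoulliPowerSeries_mul_exp_sub_one]
    rw [map_mul, map_sub, map_one, ← exp_pow_eq_rescale_exp, rescale_X, ← hE] at h1
    linear_combination -h1
  -- Step 2 : F * (1 - E^c) = C c - ∑ E^j
  have step2 : F * (1 - E ^ c) = PowerSeries.C (c : ℂ) - ∑ j ∈ range c, E ^ j := by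
    apply mul_left_cancel₀ (PowerSeries.X_ne_zero : (PowerSeries.X : ℂ⟦X⟧) ≠ 0)
    calc PowerSeries.X * (F * (1 - E ^ c)) = (PowerSeries.X * F) * (1 - E ^ c) := by ring
    _ = (B - rescale (c : ℂ) B) * (1 - E ^ c) := by rw [hXF]
    _ = B * (1 - E) * (∑ j ∈ range c, E ^ j) - rescale (c : ℂ) B * (1 - E ^ c) := by
        rw [mul_assoc, hgeo]; ring
    _ = PowerSeries.X * (PowerSeries.C (c : ℂ) - ∑ j ∈ range c, E ^ j) := by
        rw [hBmul, hBc]; ring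
  -- 1 - E^c ≠ 0
  have hne : (1 - E ^ c : ℂ⟦X⟧) ≠ 0 := by
    intro h
    have h1 := congrArg (PowerSeries.coeff 1) h
    rw [map_sub, hE, exp_pow_eq_rescale_exp, coeff_rescale, coeff_exp] at h1
    simp [Nat.factorial] at h1
    exact hc0.ne' h1
  have hGF : G = F := mul_right_cancel₀ hne (step1.trans step2.symm)
  -- conclude
  have hcoeff : PowerSeries.coeff n G
      = (1 - (c : ℂ) ^ (n + 1)) * (bernoulli (n + 1) : ℂ) / (((n : ℂ) + 1) * (n.factorial : ℂ)) := by
    rw [hGF, hF, coeff_mk]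
  calc ∑ ξ ∈ S, twistedBernoulli ξ n
      = (n.factorial : ℂ) * PowerSeries.coeff n G := by
        rw [hG, map_sum, Finset.mul_sum]
        exact Finset.sum_congr rfl fun ξ _ => rfl
    _ = (1 - (c : ℂ) ^ (n + 1)) * (bernoulli (n + 1) : ℂ) / ((n : ℂ) + 1) := by
        rw [hcoeff]
        have h1 : ((n : ℂ) + 1) ≠ 0 := Nat.cast_add_one_ne_zero n
        have h2 : ((n.factorial : ℂ)) ≠ 0 := Nat.cast_ne_zero.mpr n.factorial_ne_zero
        field_simp
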